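/- For all real numbers k1, k2 and every k4 > 0, the symmetric 3×3 real matrix Ω = (1/2)·[[4k4 + k1², k1·k2, −k1], [k1·k2, 2k4 + k2², −k2], [−k1, −k2, 2]] is positive definite. (Positive definiteness of the Lyapunov matrix used in the analysis of the second-order sliding mode filter.) -/

import Mathlib

/-- Positive definiteness of the Lyapunov matrix `Ω` used in the analysis of the
second-order sliding mode filter. -/
theorem omega_pos_def (k1 k2 k4 : ℝ) (hk4 : 0 < k4) :
    (((1 : ℝ) / 2) •
      (!![4 * k4 + k1 ^ 2, k1 * k2, -k1;
          k1 * k2, 2 * k4 + k2 ^ 2, -k2;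
          -k1, -k2, 2] : Matrix (Fin 3) (Fin 3) ℝ)).PosDef := by
  constructor
  · unfold Matrix.IsHermitian
    ext i j
    fin_cases i <;> fin_cases j <;>
      simp [Matrix.conjTranspose_apply, Matrix.smul_apply]
  · intro x hx
    have h0 : x 0 ≠ 0 ∨ x 1 ≠ 0 ∨ x 2 ≠ 0 := by
      by_contra h
      push_neg at h
      exact hx (by ext i; fin_cases i <;> simp [h.1, h.2.1, h.2.2])
    simp [dotProduct, Finsupp.sum_fintype, Matrix.mulVec, Fin.sum_univ_three, Matrix.smul_apply]
    rcases h0 with h | h | h <;>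
      nlinarith [sq_nonneg (k1 * x 0 + k2 * x 1 - x 2), sq_nonneg (x 0), sq_nonneg (x 1),
        sq_nonneg (x 2), sq_pos_of_ne_zero h, mul_pos hk4 (sq_pos_of_ne_zero h)]
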